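/- Let S be a Weyl-invariant finite multiset of arrows of Q^ab (i.e., of paths of length one). Then there exists a finite multiset S_P of directed paths of Q^ab, each of whose paths is a concatenation of arrows of S with every arrow of S used in exactly one path of S_P, such that S_P is Weyl-invariant and bipartite. -/

import Mathlib

namespace QuiverSAGBI

/-- A quiver presented by a type of vertices, a type of arrows, and source and
target maps. -/
structure PreQuiver where
  V : Type
  A : Type
  src : A → V
  tgt : A → V

/-- A directed path: a nonempty list of composable arrows. -/
structure DPath (Q : PreQuiver) where
  arrows : List Q.A
  ne : arrows ≠ []
  chain : arrows.Chain' fun a b => Q.tgt a = Q.src b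

/-- The source vertex of a path. -/
def DPath.srcV {Q : PreQuiver} (P : DPath Q) : Q.V := Q.src (P.arrows.head P.ne)

/-- The target vertex of a path. -/
def DPath.tgtV {Q : PreQuiver} (P : DPath Q) : Q.V := Q.tgt (P.arrows.getLast P.ne)

/-- A quiver is acyclic if it has no directed path from a vertex to itself. -/
def IsAcyclic (Q : PreQuiver) : Prop := ∀ P : DPath Q, P.srcV ≠ P.tgtV

/-- `n_v(S)`: the number of paths of `S` with target `v` minus the number of
paths of `S` with source `v`. -/
noncomputable def nAt {Q : PreQuiver} (S : Multiset (DPath Q)) (v : Q.V) : ℤ :=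
  (@Multiset.countP _ (fun P => DPath.tgtV P = v) (Classical.decPred _) S : ℤ) -
  (@Multiset.countP _ (fun P => DPath.srcV P = v) (Classical.decPred _) S : ℤ)

/-- A multiset of paths is bipartite if at every vertex, at most one of the
number of incoming paths and the number of outgoing paths is nonzero. -/
def IsBipartite {Q : PreQuiver} (S : Multiset (DPath Q)) : Prop :=
  ∀ v : Q.V,
    @Multiset.countP _ (fun P => DPath.tgtV P = v) (Classical.decPred _) S = 0 ∨
    @Multiset.countP _ (fun P => DPath.srcV P = v) (Classical.decPred _) S = 0

/-- The base quiver on vertices `Fin n` and arrows `Fin m`. -/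
def baseQuiver (n m : ℕ) (asrc atgt : Fin m → Fin n) : PreQuiver :=
  ⟨Fin n, Fin m, asrc, atgt⟩

/-- The abelianized quiver `Q^ab` of the quiver with vertices `Fin n`, arrows
`Fin m` and dimension vector `r`: vertices are the lifts `(p, i)` with
`i : Fin (r p)`, and each arrow `a : p → q` has lifts `a_{ij} : p_i → q_j`. -/
def abQuiver (n m : ℕ) (asrc atgt : Fin m → Fin n) (r : Fin n → ℕ) : PreQuiver where
  V := Σ p : Fin n, Fin (r p)
  A := Σ a : Fin m, Fin (r (asrc a)) × Fin (r (atgt a))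
  src := fun x => ⟨asrc x.1, x.2.1⟩
  tgt := fun x => ⟨atgt x.1, x.2.2⟩

/-- The length-one path consisting of a single arrow. -/
def singletonPath (Q : PreQuiver) (a : Q.A) : DPath Q :=
  ⟨[a], by simp, by simp [List.Chain']⟩

section Aux

/-- Concatenation of composable paths. -/
def DPath.comp {Q : PreQuiver} (P P' : DPath Q) (h : P.tgtV = P'.srcV) : DPath Q where
  arrows := P.arrows ++ P'.arrows
  ne := by simp [P.ne]
  chain := by
    refine List.IsChain.append P.chain P'.chain ?_
    intro x hx y hy
    rw [List.getLast?_eq_getLast P.ne, Option.mem_def, Option.some.injEq] at hx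
    rw [List.head?_eq_head P'.ne, Option.mem_def, Option.some.injEq] at hy
    subst hx; subst hy
    exact h

lemma DPath.comp_srcV {Q : PreQuiver} (P P' : DPath Q) (h : P.tgtV = P'.srcV) :
    (P.comp P' h).srcV = P.srcV := by
  simp only [DPath.srcV, DPath.comp]
  congr 1
  exact List.head_append_of_ne_nil P.ne

lemma DPath.comp_tgtV {Q : PreQuiver} (P P' : DPath Q) (h : P.tgtV = P'.srcV) :
    (P.comp P' h).tgtV = P'.tgtV := by
  simp only [DPath.tgtV, DPath.comp]
  congr 1
  exact List.getLast_append_of_ne_nil _ P'.ne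

open Classical in
lemma nAt_cons {Q : PreQuiver} (P : DPath Q) (S : Multiset (DPath Q)) (v : Q.V) :
    nAt (P ::ₘ S) v = nAt S v
      + ((if P.tgtV = v then 1 else 0) - (if P.srcV = v then 1 else 0) : ℤ) := by
  classical
  simp only [nAt, Multiset.countP_cons]
  push_cast
  by_cases h1 : P.tgtV = v <;> by_cases h2 : P.srcV = v <;> simp [h1, h2] <;> ring

/-- The key step: any multiset of paths in an acyclic quiver can be merged into
a bipartite one with the same arrow multiset and the same `nAt`. -/
lemma exists_bipartite {Q : PreQuiver} (hQ : IsAcyclic Q) :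
    ∀ (N : ℕ) (SP : Multiset (DPath Q)), Multiset.card SP ≤ N →
    ∃ SP' : Multiset (DPath Q),
      (SP'.map fun P => (P.arrows : Multiset Q.A)).sum
        = (SP.map fun P => (P.arrows : Multiset Q.A)).sum ∧
      (∀ v, nAt SP' v = nAt SP v) ∧ IsBipartite SP' := by
  classical
  intro N
  induction N with
  | zero =>
    intro SP h
    have : SP = 0 := Multiset.card_eq_zero.mp (Nat.le_zero.mp h)
    subst this
    exact ⟨0, rfl, fun _ => rfl, fun v => Or.inl rfl⟩
  | succ N ih =>
    intro SP hcard
    by_cases hb : IsBipartite SP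
    · exact ⟨SP, rfl, fun _ => rfl, hb⟩
    · simp only [IsBipartite, not_forall, not_or] at hb
      obtain ⟨v, hv1, hv2⟩ := hb
      obtain ⟨P, hP, htP⟩ : ∃ P ∈ SP, DPath.tgtV P = v := by
        by_contra hc
        push_neg at hc
        exact hv1 (Multiset.countP_eq_zero.mpr hc)
      obtain ⟨P', hP', hsP'⟩ : ∃ P' ∈ SP, DPath.srcV P' = v := by
        by_contra hc
        push_neg at hc
        exact hv2 (Multiset.countP_eq_zero.mpr hc)
      have hne : P' ≠ P := by
        intro hEq
        subst hEq
        exact hQ P' (hsP'.trans htP.symm)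
      have hP'e : P' ∈ SP.erase P := (Multiset.mem_erase_of_ne hne).mpr hP'
      obtain ⟨T, hSP⟩ : ∃ T, SP = P ::ₘ P' ::ₘ T :=
        ⟨(SP.erase P).erase P', by
          rw [Multiset.cons_erase hP'e, Multiset.cons_erase hP]⟩
      have hcomp : DPath.tgtV P = DPath.srcV P' := htP.trans hsP'.symm
      have hcard2 :
          Multiset.card (P.comp P' hcomp ::ₘ T) ≤ N := by
        have := hcard
        rw [hSP] at this
        simp only [Multiset.card_cons] at this ⊢
        omega
      obtain ⟨SP', h1, h2, h3⟩ := ih _ hcard2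
      refine ⟨SP', ?_, ?_, h3⟩
      · rw [h1, hSP]
        simp only [Multiset.map_cons, Multiset.sum_cons, DPath.comp]
        rw [← Multiset.coe_add, ← add_assoc]
      · intro w
        rw [h2 w, hSP]
        rw [nAt_cons, nAt_cons, nAt_cons,
          DPath.comp_tgtV, DPath.comp_srcV, htP, hsP']
        ring

end Aux

/-- Acyclicity lifts from the base quiver to the abelianized quiver. -/
lemma abQuiver_acyclic (n m : ℕ) (asrc atgt : Fin m → Fin n)
    (hacyc : IsAcyclic (baseQuiver n m asrc atgt)) (r : Fin n → ℕ) :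
    IsAcyclic (abQuiver n m asrc atgt r) := by
  intro P hEq
  have hch : (P.arrows.map Sigma.fst).Chain'
      fun a b => (baseQuiver n m asrc atgt).tgt a = (baseQuiver n m asrc atgt).src b := by
    refine (List.isChain_map Sigma.fst).mpr ?_
    exact P.chain.imp fun _ _ hab => congrArg Sigma.fst hab
  set Pb : DPath (baseQuiver n m asrc atgt) :=
    ⟨P.arrows.map Sigma.fst, fun h => P.ne (List.map_eq_nil_iff.mp h), hch⟩ with hPb
  apply hacyc Pb
  have hs : Pb.srcV = (P.srcV).1 := by
    simp [DPath.srcV, hPb, baseQuiver, abQuiver]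
  have ht : Pb.tgtV = (P.tgtV).1 := by
    simp [DPath.tgtV, hPb, baseQuiver, abQuiver]
  rw [hs, ht, hEq]

/-- Let `S` be a Weyl-invariant finite multiset of arrows of
the abelianized quiver `Q^ab` (identified with single-arrow paths).  Then the
arrows of `S` can be partitioned into a finite multiset `SP` of directed paths
of `Q^ab` (each path a concatenation of arrows of `S`, every arrow of `S` used
in exactly one path) such that `SP` is Weyl-invariant and bipartite. -/
theorem statement1 (n m : ℕ) (asrc atgt : Fin m → Fin n)
    (hacyc : IsAcyclic (baseQuiver n m asrc atgt))
    (r : Fin n → ℕ) (hr : ∀ p, 0 < r p)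
    (S : Multiset ((abQuiver n m asrc atgt r).A))
    (hW : ∀ (p : Fin n) (i i' : Fin (r p)),
      nAt (S.map (singletonPath (abQuiver n m asrc atgt r))) ⟨p, i⟩ =
      nAt (S.map (singletonPath (abQuiver n m asrc atgt r))) ⟨p, i'⟩) :
    ∃ SP : Multiset (DPath (abQuiver n m asrc atgt r)),
      (SP.map fun P => (P.arrows : Multiset (abQuiver n m asrc atgt r).A)).sum
          = S ∧
      (∀ (p : Fin n) (i i' : Fin (r p)), nAt SP ⟨p, i⟩ = nAt SP ⟨p, i'⟩) ∧
      IsBipartite SP := by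
  classical
  obtain ⟨SP, h1, h2, h3⟩ := exists_bipartite
      (abQuiver_acyclic n m asrc atgt hacyc r)
      (Multiset.card (S.map (singletonPath (abQuiver n m asrc atgt r))))
      (S.map (singletonPath (abQuiver n m asrc atgt r))) le_rfl
  refine ⟨SP, ?_, ?_, h3⟩
  · rw [h1, Multiset.map_map]
    have hsing : ∀ a : (abQuiver n m asrc atgt r).A,
        (((singletonPath (abQuiver n m asrc atgt r)) a).arrows : Multiset _) = {a} :=
      fun a => rfl
    simp only [Function.comp, hsing]
    exact Multiset.sum_map_singleton S
  · intro p i i'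
    exact (h2 _).trans ((hW p i i').trans (h2 _).symm)

end QuiverSAGBI
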